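/- arXiv:1503.06444 — 2 statements merged into one kernel-verified Lean document; each statement's English description precedes it below -/
import Mathlib

section
/- Let F be a field of characteristic 0 and let q1, q2 be quadratic forms on F^4. Define quadratic forms Q1 and Q2 on F^7 (coordinates x1,…,x7) by Q1(x1,…,x7) = q1(x1,x2,x3,x4) + x5·x6 and Q2(x1,…,x7) = q2(x1,x2,x3,x4) + x5·x7. Then there exists a 3-dimensional F-linear subspace of F^7 on which both Q1 and Q2 vanish identically if and only if there exists a nonzero vector v ∈ F^4 with q1(v) = 0 and q2(v) = 0. -/
/-- Given a quadratic form `q1` on `F^4`, the quadratic form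
`Q1(x1,…,x7) = q1(x1,x2,x3,x4) + x5·x6` on `F^7` (indices are 0-based below). -/
noncomputable def amerFormFst7 {F : Type*} [Field F] (q1 : QuadraticForm F (Fin 4 → F)) :
    QuadraticForm F (Fin 7 → F) :=
  q1.comp (LinearMap.funLeft F F (Fin.castLE (by omega))) +
    QuadraticMap.proj (R := F) (A := F) (4 : Fin 7) 5

/-- Given a quadratic form `q2` on `F^4`, the quadratic form
`Q2(x1,…,x7) = q2(x1,x2,x3,x4) + x5·x7` on `F^7` (indices are 0-based below). -/
noncomputable def amerFormSnd7 {F : Type*} [Field F] (q2 : QuadraticForm F (Fin 4 → F)) :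
    QuadraticForm F (Fin 7 → F) :=
  q2.comp (LinearMap.funLeft F F (Fin.castLE (by omega))) +
    QuadraticMap.proj (R := F) (A := F) (4 : Fin 7) 6

lemma le47 : (4 : ℕ) ≤ 7 := by omega

lemma amerFst_apply {F : Type*} [Field F] (q1 : QuadraticForm F (Fin 4 → F)) (x : Fin 7 → F) :
    amerFormFst7 q1 x = q1 (fun i => x (Fin.castLE le47 i)) + x 4 * x 5 := by
  simp [amerFormFst7, QuadraticMap.proj_apply, QuadraticMap.comp_apply,
    LinearMap.funLeft_apply, Function.comp]
  rfl

lemma amerSnd_apply {F : Type*} [Field F] (q2 : QuadraticForm F (Fin 4 → F)) (x : Fin 7 → F) :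
    amerFormSnd7 q2 x = q2 (fun i => x (Fin.castLE le47 i)) + x 4 * x 6 := by
  simp [amerFormSnd7, QuadraticMap.proj_apply, QuadraticMap.comp_apply,
    LinearMap.funLeft_apply, Function.comp]
  rfl

/-- Let `F` be a field of characteristic `0` and `q1`, `q2` quadratic forms on `F^4`. The
forms `Q1 = q1(x1,…,x4) + x5 x6` and `Q2 = q2(x1,…,x4) + x5 x7` on `F^7` vanish identically
on a common `3`-dimensional linear subspace of `F^7` iff `q1` and `q2` have a common
nontrivial zero in `F^4`. -/
theorem amer_subspace_seven_iff_common_zero (F : Type*) [Field F] [CharZero F]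
    (q1 q2 : QuadraticForm F (Fin 4 → F)) :
    (∃ W : Submodule F (Fin 7 → F), Module.finrank F ↥W = 3 ∧
        ∀ x ∈ W, amerFormFst7 q1 x = 0 ∧ amerFormSnd7 q2 x = 0) ↔
      ∃ v : Fin 4 → F, v ≠ 0 ∧ q1 v = 0 ∧ q2 v = 0 := by
  constructor
  · rintro ⟨W, hrank, hvan⟩
    by_cases hker : ∃ w ∈ W, w ≠ 0 ∧ w 4 = 0 ∧ w 5 = 0 ∧ w 6 = 0
    · obtain ⟨w, hwW, hwne, h4, h5, h6⟩ := hker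
      refine ⟨fun j => w (Fin.castLE le47 j), ?_, ?_, ?_⟩
      · intro hv0
        apply hwne
        funext i
        fin_cases i
        · exact congrFun hv0 0
        · exact congrFun hv0 1
        · exact congrFun hv0 2
        · exact congrFun hv0 3
        · exact h4
        · exact h5
        · exact h6
      · have h := (hvan w hwW).1
        rw [amerFst_apply, h4] at h
        simpa using h
      · have h := (hvan w hwW).2
        rw [amerSnd_apply, h4] at h
        simpa using h
    · -- projection to the last three coordinates is injective on W
      set L : (Fin 7 → F) →ₗ[F] (Fin 3 → F) :=
        LinearMap.funLeft F F (fun j : Fin 3 => (j.addNat 4 : Fin 7)) with hL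
      have hLapp : ∀ (x : Fin 7 → F), L x = ![x 4, x 5, x 6] := by
        intro x
        funext j
        fin_cases j <;> rfl
      have hinj : Function.Injective (L.domRestrict W) := by
        rw [← LinearMap.ker_eq_bot, eq_bot_iff]
        rintro ⟨w, hwW⟩ hw
        simp only [LinearMap.mem_ker, LinearMap.domRestrict_apply] at hw
        rw [hLapp] at hw
        have h4 : w 4 = 0 := congrFun hw 0
        have h5 : w 5 = 0 := congrFun hw 1
        have h6 : w 6 = 0 := congrFun hw 2
        have : w = 0 := by
          by_contra hne
          exact hker ⟨w, hwW, hne, h4, h5, h6⟩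
        simpa using this
      have hfd : FiniteDimensional F W := inferInstance
      have hsurj : Function.Surjective (L.domRestrict W) := by
        refine (LinearMap.injective_iff_surjective_of_finrank_eq_finrank ?_).mp hinj
        rw [hrank]; simp
      obtain ⟨⟨w, hwW⟩, hw⟩ := hsurj ![1, 0, 0]
      simp only [LinearMap.domRestrict_apply] at hw
      rw [hLapp] at hw
      have h4 : w 4 = 1 := congrFun hw 0
      have h5 : w 5 = 0 := congrFun hw 1
      have h6 : w 6 = 0 := congrFun hw 2
      have hq1u : q1 (fun j => w (Fin.castLE le47 j)) = 0 := by
        have h := (hvan w hwW).1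
        rw [amerFst_apply, h5] at h
        simpa using h
      have hq2u : q2 (fun j => w (Fin.castLE le47 j)) = 0 := by
        have h := (hvan w hwW).2
        rw [amerSnd_apply, h6] at h
        simpa using h
      by_cases hu0 : (fun j => w (Fin.castLE le47 j)) = (0 : Fin 4 → F)
      · exfalso
        obtain ⟨⟨w', hw'W⟩, hw'⟩ := hsurj ![0, 1, 0]
        simp only [LinearMap.domRestrict_apply] at hw'
        rw [hLapp] at hw'
        have h4' : w' 4 = 0 := congrFun hw' 0
        have h5' : w' 5 = 1 := congrFun hw' 1
        have hq1u' : q1 (fun j => w' (Fin.castLE le47 j)) = 0 := by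
          have h := (hvan w' hw'W).1
          rw [amerFst_apply, h4'] at h
          simpa using h
        have hz := (hvan (w + w') (W.add_mem hwW hw'W)).1
        rw [amerFst_apply] at hz
        have hcomp : (fun j => (w + w') (Fin.castLE le47 j))
            = (fun j => w' (Fin.castLE le47 j)) := by
          funext j
          have h0 : w (Fin.castLE le47 j) = 0 := congrFun hu0 j
          simp [h0]
        rw [hcomp, hq1u'] at hz
        simp only [Pi.add_apply, h4, h5, h4', h5'] at hz
        norm_num at hz
      · exact ⟨fun j => w (Fin.castLE le47 j), hu0, hq1u, hq2u⟩
  · rintro ⟨v, hvne, hv1, hv2⟩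
    -- build W as the range of an injective map F^3 → F^7
    set ev : Fin 7 → F := fun i => if h : (i : ℕ) < 4 then v ⟨i, h⟩ else 0 with hev
    set M : (Fin 3 → F) →ₗ[F] (Fin 7 → F) :=
      (LinearMap.proj 0).smulRight ev
        + (LinearMap.proj 1).smulRight (Pi.single (5 : Fin 7) (1 : F))
        + (LinearMap.proj 2).smulRight (Pi.single (6 : Fin 7) (1 : F)) with hM
    have hMapp : ∀ (c : Fin 3 → F) (i : Fin 7),
        M c i = c 0 * ev i + c 1 * (Pi.single (5 : Fin 7) (1 : F) : Fin 7 → F) i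
          + c 2 * (Pi.single (6 : Fin 7) (1 : F) : Fin 7 → F) i := by
      intro c i
      simp [hM, mul_comm]
    have hM4 : ∀ c : Fin 3 → F, M c 4 = 0 := by
      intro c; rw [hMapp]; simp [hev, Pi.single_apply]
    have hM5 : ∀ c : Fin 3 → F, M c 5 = c 1 := by
      intro c; rw [hMapp]; simp [hev, Pi.single_apply]
    have hM6 : ∀ c : Fin 3 → F, M c 6 = c 2 := by
      intro c; rw [hMapp]; simp [hev, Pi.single_apply]
    have hMfirst : ∀ (c : Fin 3 → F) (j : Fin 4),
        M c (Fin.castLE le47 j) = c 0 * v j := by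
      intro c j
      rw [hMapp]
      have hne5 : Fin.castLE le47 j ≠ (5 : Fin 7) := by
        simp only [Fin.ne_iff_vne]
        have := j.isLt
        simp only [Fin.coe_castLE]
        omega
      have hne6 : Fin.castLE le47 j ≠ (6 : Fin 7) := by
        simp only [Fin.ne_iff_vne]
        have := j.isLt
        simp only [Fin.coe_castLE]
        omega
      rw [Pi.single_apply, Pi.single_apply, if_neg hne5, if_neg hne6]
      have : ev (Fin.castLE le47 j) = v j := by
        simp only [hev]
        rw [dif_pos (show ((Fin.castLE le47 j : Fin 7) : ℕ) < 4 by simp)]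
        congr 1
      rw [this]; ring
    have hMinj : Function.Injective M := by
      rw [← LinearMap.ker_eq_bot, eq_bot_iff]
      intro c hc
      simp only [LinearMap.mem_ker] at hc
      obtain ⟨j, hj⟩ : ∃ j, v j ≠ 0 := by
        by_contra h; push_neg at h; exact hvne (funext h)
      have h0 : c 0 = 0 := by
        have := hMfirst c j
        rw [hc] at this
        simp only [Pi.zero_apply] at this
        rcases mul_eq_zero.mp this.symm with h | h
        · exact h
        · exact absurd h hj
      have h1 : c 1 = 0 := by have := hM5 c; rw [hc] at this; simpa using this.symm
      have h2 : c 2 = 0 := by have := hM6 c; rw [hc] at this; simpa using this.symm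
      have : c = 0 := by
        funext i; fin_cases i
        · exact h0
        · exact h1
        · exact h2
      simpa using this
    refine ⟨LinearMap.range M, ?_, ?_⟩
    · rw [LinearMap.finrank_range_of_inj hMinj]
      simp
    · rintro x ⟨c, rfl⟩
      have hcomp : (fun j => M c (Fin.castLE le47 j)) = c 0 • v := by
        funext j
        rw [hMfirst]
        rfl
      constructor
      · rw [amerFst_apply, hcomp, hM4]
        rw [QuadraticMap.map_smul, hv1]
        simp
      · rw [amerSnd_apply, hcomp, hM4]
        rw [QuadraticMap.map_smul, hv2]
        simp
end

section
/- Let k be an infinite field of characteristic different from 2 and let f, g be quadratic forms on k^{m}. Then the quadratic form f + t·g on k(t)^{m} over the rational function field k(t) is nondegenerate if and only if there exist λ, μ ∈ k, not both zero, such that the quadratic form λf + μg on k^m is nondegenerate. -/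
/-- The base change of a quadratic form on `K^m` along a field homomorphism `σ : K →+* L`,
obtained by applying `σ` entrywise to the Gram matrix of the form. -/
noncomputable def QuadraticForm.mapBase {K L : Type*} [Field K] [Field L] [Invertible (2 : K)]
    {m : ℕ} (σ : K →+* L) (q : QuadraticForm K (Fin m → K)) :
    QuadraticForm L (Fin m → L) :=
  ((QuadraticMap.toMatrix' q).map σ).toQuadraticMap'

open Matrix Polynomial

set_option maxHeartbeats 1000000
set_option synthInstance.maxHeartbeats 200000

section Aux

variable {R : Type*} [CommRing R] {n : ℕ}

lemma aux_flip_toLinearMap₂' (M : Matrix (Fin n) (Fin n) R) :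
    LinearMap.flip (Matrix.toLinearMap₂' R M : (Fin n → R) →ₗ[R] (Fin n → R) →ₗ[R] R) =
      Matrix.toLinearMap₂' R Mᵀ := by
  refine LinearMap.ext₂ fun x y => ?_
  rw [LinearMap.flip_apply, Matrix.toLinearMap₂'_apply, Matrix.toLinearMap₂'_apply,
    Finset.sum_comm]
  exact Finset.sum_congr rfl fun i _ => Finset.sum_congr rfl fun j _ => by
    rw [Matrix.transpose_apply]; exact smul_comm _ _ _

lemma aux_polarBilin_toQuadraticMap' (M : Matrix (Fin n) (Fin n) R) :
    (Matrix.toQuadraticMap' M).polarBilin = Matrix.toLinearMap₂' R (M + Mᵀ) := by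
  show (LinearMap.BilinMap.toQuadraticMap
      ((Matrix.toLinearMap₂' R M : (Fin n → R) →ₗ[R] (Fin n → R) →ₗ[R] R))).polarBilin = _
  rw [LinearMap.BilinMap.polarBilin_toQuadraticMap, aux_flip_toLinearMap₂', ← map_add]

lemma aux_toQuadraticMap'_toMatrix' [Invertible (2 : R)] (q : QuadraticForm R (Fin n → R)) :
    (QuadraticForm.toMatrix' q).toQuadraticMap' = q := by
  rw [QuadraticForm.toMatrix', Matrix.toQuadraticMap', Matrix.toQuadraticForm',
    Matrix.toLinearMap₂'_toMatrix']
  exact QuadraticMap.toQuadraticMap_associated _ _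

lemma aux_toMatrix'_add [Invertible (2 : R)] (q₁ q₂ : QuadraticForm R (Fin n → R)) :
    (q₁ + q₂).toMatrix' = q₁.toMatrix' + q₂.toMatrix' := by
  simp only [QuadraticForm.toMatrix', map_add]

lemma aux_polarBilin_eq [Invertible (2 : R)] (q : QuadraticForm R (Fin n → R)) :
    q.polarBilin = Matrix.toLinearMap₂' R (q.toMatrix' + q.toMatrix'ᵀ) := by
  conv_lhs => rw [← aux_toQuadraticMap'_toMatrix' q]
  exact aux_polarBilin_toQuadraticMap' _

end Aux

/-- The key determinant-theoretic statement. -/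
lemma det_pencil_ne_zero_iff (k : Type*) [Field k] [Infinite k] (m : ℕ)
    (C D : Matrix (Fin m) (Fin m) k) :
    (C.map (algebraMap k (RatFunc k)) +
        (RatFunc.X : RatFunc k) • D.map (algebraMap k (RatFunc k))).det ≠ 0 ↔
      ∃ lam mu : k, ¬(lam = 0 ∧ mu = 0) ∧ (lam • C + mu • D).det ≠ 0 := by
  classical
  set ι : k →+* k[X] := algebraMap k k[X]
  set P : k[X] := (C.map ι + (Polynomial.X : k[X]) • D.map ι).det with hP
  set Q : k[X] := (D.map ι + (Polynomial.X : k[X]) • C.map ι).det with hQ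
  have hmapC : ∀ (E F : Matrix (Fin m) (Fin m) k),
      (E.map ι + (Polynomial.X : k[X]) • F.map ι).map (algebraMap k[X] (RatFunc k)) =
        E.map (algebraMap k (RatFunc k)) +
          (RatFunc.X : RatFunc k) • F.map (algebraMap k (RatFunc k)) := by
    intro E F
    ext i j
    simp only [Matrix.map_apply, Matrix.add_apply, Matrix.smul_apply, map_add, _root_.map_mul,
      smul_eq_mul, RatFunc.algebraMap_X]
    rw [← IsScalarTower.algebraMap_apply k k[X] (RatFunc k),
      ← IsScalarTower.algebraMap_apply k k[X] (RatFunc k)]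
  have key : (C.map (algebraMap k (RatFunc k)) +
      (RatFunc.X : RatFunc k) • D.map (algebraMap k (RatFunc k))).det =
      algebraMap k[X] (RatFunc k) P := by
    rw [hP, RingHom.map_det, RingHom.mapMatrix_apply, hmapC]
  have hinj : Function.Injective (algebraMap k[X] (RatFunc k)) :=
    RatFunc.algebraMap_injective k
  have heval : ∀ (E F : Matrix (Fin m) (Fin m) k) (a : k),
      ((E.map ι + (Polynomial.X : k[X]) • F.map ι).det).eval a = (E + a • F).det := by
    intro E F a
    rw [← Polynomial.coe_evalRingHom, RingHom.map_det, RingHom.mapMatrix_apply]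
    congr 1
    ext i j
    simp only [Polynomial.coe_evalRingHom, Matrix.map_apply, Matrix.add_apply,
      Matrix.smul_apply, smul_eq_mul, eval_add, eval_mul, eval_X, ι,
      Polynomial.algebraMap_eq, eval_C]
  rw [key]
  constructor
  · intro h
    have hP0 : P ≠ 0 := fun h0 => h (by rw [h0, map_zero])
    obtain ⟨a, ha⟩ : ∃ a : k, P.eval a ≠ 0 := by
      by_contra hc
      push_neg at hc
      exact hP0 (Polynomial.zero_of_eval_zero P hc)
    refine ⟨1, a, by simp, ?_⟩
    rw [one_smul]
    rw [hP, heval] at ha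
    exact ha
  · rintro ⟨lam, mu, hlm, hdet⟩ h0
    have hP0 : P = 0 := hinj (by simpa using h0)
    have hall : ∀ a : k, (C + a • D).det = 0 := by
      intro a
      rw [← heval C D a, ← hP, hP0, Polynomial.eval_zero]
    by_cases hlam : lam = 0
    · have hmu : mu ≠ 0 := fun h => hlm ⟨hlam, h⟩
      have hD : D.det ≠ 0 := by
        intro hDd
        apply hdet
        rw [hlam, zero_smul, zero_add, Matrix.det_smul, hDd, mul_zero]
      -- Q vanishes at every nonzero a, hence Q = 0, hence det D = Q.eval 0 = 0.
      have hQ0 : Q = 0 := by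
        apply Polynomial.eq_zero_of_infinite_isRoot
        apply Set.Infinite.mono (s := {x : k | x ≠ 0})
        · intro a ha
          have ha' : (a : k) ≠ 0 := ha
          have : (D + a • C) = a • (a⁻¹ • D + C) := by
            rw [smul_add, smul_smul, mul_inv_cancel₀ ha', one_smul, add_comm]
          have hzero : (D + a • C).det = 0 := by
            rw [this, Matrix.det_smul, add_comm, hall a⁻¹, mul_zero]
          show Q.IsRoot a
          rw [Polynomial.IsRoot, hQ, heval, hzero]
        · exact Set.Finite.infinite_compl (Set.finite_singleton (0 : k))
      apply hD
      have := heval D C 0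
      rw [← hQ, hQ0, Polynomial.eval_zero] at this
      rw [zero_smul, add_zero] at this
      exact this.symm
    · apply hdet
      have : lam • C + mu • D = lam • (C + (lam⁻¹ * mu) • D) := by
        rw [smul_add, smul_smul, ← mul_assoc, mul_inv_cancel₀ hlam, one_mul]
      rw [this, Matrix.det_smul, hall, mul_zero]

/-- Let `k` be an infinite field of characteristic different from `2` (equivalently, with
`2` invertible) and `f`, `g` quadratic forms on `k^m`. The pencil `f + t•g` over the
rational function field `k(t)` is nondegenerate iff some member `λ•f + μ•g` of the pencil
with `(λ, μ) ≠ (0, 0)` is nondegenerate over `k`. -/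
theorem pencil_nondegenerate_iff_exists_nondegenerate_member
    (k : Type*) [Field k] [Infinite k] [Invertible (2 : k)] (m : ℕ)
    (f g : QuadraticForm k (Fin m → k)) :
    LinearMap.BilinForm.Nondegenerate
      (f.mapBase (algebraMap k (RatFunc k)) +
        (RatFunc.X : RatFunc k) • g.mapBase (algebraMap k (RatFunc k))).polarBilin ↔
      ∃ lam mu : k, ¬(lam = 0 ∧ mu = 0) ∧
        LinearMap.BilinForm.Nondegenerate (lam • f + mu • g).polarBilin := by
  classical
  set σ := algebraMap k (RatFunc k)
  set A := QuadraticForm.toMatrix' f with hA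
  set B := QuadraticForm.toMatrix' g with hB
  -- the pencil is `toQuadraticMap'` of the matrix pencil
  have hpencil : f.mapBase σ + (RatFunc.X : RatFunc k) • g.mapBase σ =
      (A.map σ + (RatFunc.X : RatFunc k) • B.map σ).toQuadraticMap' := by
    simp only [QuadraticForm.mapBase, QuadraticForm.QuadraticMap.toMatrix', Matrix.toQuadraticMap', Matrix.toQuadraticForm', map_add, _root_.map_smul,
      LinearMap.BilinMap.toQuadraticMap_add, LinearMap.BilinMap.toQuadraticMap_smul, hA, hB]
  have hLHS : (f.mapBase σ + (RatFunc.X : RatFunc k) • g.mapBase σ).polarBilin =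
      Matrix.toLinearMap₂' (RatFunc k)
        ((A + Aᵀ).map σ + (RatFunc.X : RatFunc k) • (B + Bᵀ).map σ) := by
    rw [hpencil, aux_polarBilin_toQuadraticMap']
    congr 1
    ext i j
    simp [Matrix.map_apply, Matrix.add_apply, Matrix.smul_apply, Matrix.transpose_apply,
      map_add, mul_add]
    ring
  have hRHS : ∀ lam mu : k, (lam • f + mu • g).polarBilin =
      Matrix.toLinearMap₂' k (lam • (A + Aᵀ) + mu • (B + Bᵀ)) := by
    intro lam mu
    rw [aux_polarBilin_eq]
    congr 1
    rw [aux_toMatrix'_add, QuadraticForm.toMatrix'_smul, QuadraticForm.toMatrix'_smul, ← hA, ← hB]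
    ext i j
    simp [Matrix.add_apply, Matrix.smul_apply, Matrix.transpose_apply]
    ring
  have hnd1 : ∀ M : Matrix (Fin m) (Fin m) (RatFunc k),
      LinearMap.BilinForm.Nondegenerate (Matrix.toLinearMap₂' (RatFunc k) M) ↔ M.det ≠ 0 :=
    fun M => LinearMap.nondegenerate_toLinearMap₂'_iff_det_ne_zero
  have hnd2 : ∀ M : Matrix (Fin m) (Fin m) k,
      LinearMap.BilinForm.Nondegenerate (Matrix.toLinearMap₂' k M) ↔ M.det ≠ 0 :=
    fun M => LinearMap.nondegenerate_toLinearMap₂'_iff_det_ne_zero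
  rw [hLHS, hnd1]
  rw [det_pencil_ne_zero_iff k m (A + Aᵀ) (B + Bᵀ)]
  constructor
  · rintro ⟨lam, mu, h1, h2⟩
    exact ⟨lam, mu, h1, by rw [hRHS, hnd2]; exact h2⟩
  · rintro ⟨lam, mu, h1, h2⟩
    refine ⟨lam, mu, h1, ?_⟩
    rw [hRHS, hnd2] at h2
    exact h2
end
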